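/- arXiv:2210.08328 — 7 statements merged into one kernel-verified Lean document; each statement's English description precedes it below -/
import Mathlib

section
/- For every integer n ≥ 1, every integer b ≥ 2, and every γ ∈ (0,1), the strict inequality γ^{−n}(1−γ^n)(1−(1−γ^n)^{b−1}) < b−1 holds; in particular the denominator b−1 − γ^{−n}(1−γ^n)(1−(1−γ^n)^{b−1}) of ψ_t(γ) is strictly positive. -/
/-- The denominator of `ψ_t(γ)` is strictly positive: for `n ≥ 1`, `b ≥ 2` and
`γ ∈ (0,1)` one has `γ^{−n}(1−γ^n)(1−(1−γ^n)^{b−1}) < b−1`. -/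
theorem psi_denominator_pos
    (n b : ℕ) (hn : 1 ≤ n) (hb : 2 ≤ b) (γ : ℝ) (hγ : γ ∈ Set.Ioo (0 : ℝ) 1) :
    (γ ^ n)⁻¹ * (1 - γ ^ n) * (1 - (1 - γ ^ n) ^ (b - 1)) < (b : ℝ) - 1 := by
  obtain ⟨hγ0, hγ1⟩ := hγ
  set x : ℝ := γ ^ n with hxdef
  have hx0 : 0 < x := pow_pos hγ0 n
  have hx1 : x < 1 := pow_lt_one₀ hγ0.le hγ1 (by omega)
  set m : ℕ := b - 1 with hm
  have hm1 : 1 ≤ m := by omega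
  -- Bernoulli: 1 - m*x ≤ (1-x)^m
  have hbern : 1 - (m : ℝ) * x ≤ (1 - x) ^ m := by
    have := one_add_mul_le_pow (a := -x) (by linarith) m
    simpa [sub_eq_add_neg, mul_comm, mul_neg] using this
  have hkey : (1 - (1 - x) ^ m) ≤ (m : ℝ) * x := by linarith
  have hpow_pos : 0 < (1 - x) ^ m := pow_pos (by linarith) m
  have hpow_lt : (1 - x) ^ m < 1 := pow_lt_one₀ (by linarith) (by linarith) (by omega)
  have h1 : (1 - x) * (1 - (1 - x) ^ m) < (m : ℝ) * x := by
    calc (1 - x) * (1 - (1 - x) ^ m) < 1 * (1 - (1 - x) ^ m) := by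
          apply mul_lt_mul_of_pos_right (by linarith) (by linarith)
      _ = 1 - (1 - x) ^ m := one_mul _
      _ ≤ (m : ℝ) * x := hkey
  have h2 : x⁻¹ * ((1 - x) * (1 - (1 - x) ^ m)) < x⁻¹ * ((m : ℝ) * x) :=
    mul_lt_mul_of_pos_left h1 (inv_pos.mpr hx0)
  have h3 : x⁻¹ * ((m : ℝ) * x) = (m : ℝ) := by field_simp
  have hmb : (m : ℝ) = (b : ℝ) - 1 := by
    have : (m : ℝ) = ((b : ℕ) : ℝ) - 1 := by
      rw [hm]; push_cast [Nat.cast_sub (by omega : 1 ≤ b)]; ring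
    simpa using this
  calc x⁻¹ * (1 - x) * (1 - (1 - x) ^ m)
      = x⁻¹ * ((1 - x) * (1 - (1 - x) ^ m)) := by ring
    _ < (m : ℝ) := by rw [← h3]; exact h2
    _ = (b : ℝ) - 1 := hmb
end

section
/- Fix integers n ≥ 1, b ≥ 2, and t with 2 ≤ t ≤ b, and define ψ_t(γ) = (1−(1−γ^n)^{t−1}) / (b−1 − γ^{−n}(1−γ^n)(1−(1−γ^n)^{b−1})) for γ ∈ (0,1). Then ψ_t(γ) → 2(t−1)/(b(b−1)) as γ → 0⁺. -/
open Filter Set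

lemma psi_geom_aux (u : ℝ) (m : ℕ) :
    1 - u ^ m = (1 - u) * ∑ k ∈ Finset.range m, u ^ k := by
  have h := geom_sum_mul u m
  linear_combination h

/-- For `n ≥ 1`, `2 ≤ t ≤ b`, the posterior probability
`ψ_t(γ) = (1−(1−γ^n)^{t−1}) / (b−1 − γ^{−n}(1−γ^n)(1−(1−γ^n)^{b−1}))`
tends to `2(t−1)/(b(b−1))` as `γ → 0⁺`. -/
theorem psi_limit_at_zero
    (n b t : ℕ) (hn : 1 ≤ n) (hb : 2 ≤ b) (ht : 2 ≤ t) (htb : t ≤ b) :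
    Tendsto (fun γ : ℝ =>
        (1 - (1 - γ ^ n) ^ (t - 1)) /
          ((b : ℝ) - 1 - (γ ^ n)⁻¹ * (1 - γ ^ n) * (1 - (1 - γ ^ n) ^ (b - 1))))
      (nhdsWithin 0 (Ioi 0)) (nhds (2 * ((t : ℝ) - 1) / ((b : ℝ) * ((b : ℝ) - 1)))) := by
  set N : ℝ → ℝ := fun γ => ∑ k ∈ Finset.range (t-1), (1 - γ^n)^k with hN
  set D : ℝ → ℝ := fun γ =>
      ∑ j ∈ Finset.range (b-1), ∑ i ∈ Finset.range (j+1), (1 - γ^n)^i with hD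
  -- eventual equality with N/D on Ioi 0
  have heq : ∀ γ ∈ Ioi (0:ℝ),
      (1 - (1 - γ ^ n) ^ (t - 1)) /
        ((b : ℝ) - 1 - (γ ^ n)⁻¹ * (1 - γ ^ n) * (1 - (1 - γ ^ n) ^ (b - 1)))
      = N γ / D γ := by
    intro γ hγ
    have hx : γ^n ≠ 0 := (pow_pos hγ n).ne'
    set x := γ^n with hxdef
    set u := 1 - x with hu
    have hxu : x = 1 - u := by rw [hu]; ring
    have hnum : 1 - u ^ (t-1) = x * N γ := by
      rw [hxu, hN]; exact psi_geom_aux u (t-1)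
    have hden : (b:ℝ) - 1 - x⁻¹ * u * (1 - u^(b-1)) = x * D γ := by
      have h1 : x * D γ = ∑ j ∈ Finset.range (b-1), (1 - u^(j+1)) := by
        rw [hD, Finset.mul_sum]
        refine Finset.sum_congr rfl fun j _ => ?_
        rw [hxu]; exact (psi_geom_aux u (j+1)).symm
      have h2 : x⁻¹ * u * (1 - u^(b-1)) = u * ∑ k ∈ Finset.range (b-1), u^k := by
        rw [hxu] at hx ⊢
        rw [psi_geom_aux u (b-1)]
        field_simp
      have hb1 : ((b-1 : ℕ) : ℝ) = (b:ℝ) - 1 := by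
        have h1b : (1:ℕ) ≤ b := by omega
        rw [Nat.cast_sub h1b]; norm_num
      have h3 : ∑ j ∈ Finset.range (b-1), (1 - u^(j+1))
          = (b:ℝ) - 1 - u * ∑ k ∈ Finset.range (b-1), u^k := by
        rw [Finset.sum_sub_distrib, Finset.sum_const, Finset.card_range, Finset.mul_sum]
        simp only [nsmul_eq_mul, mul_one]
        rw [hb1]
        congr 1
        exact Finset.sum_congr rfl fun j _ => pow_succ' u j
      rw [h1, h3, h2]
    rw [hnum, hden, mul_div_mul_left _ _ hx]
  -- limits of N and D at 0
  have h0 : (0:ℝ)^n = 0 := zero_pow (by omega)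
  have hNcont : Continuous N := by
    apply continuous_finset_sum
    intro k _; fun_prop
  have hDcont : Continuous D := by
    apply continuous_finset_sum
    intro j _; apply continuous_finset_sum
    intro i _; fun_prop
  have hN0 : N 0 = (t:ℝ) - 1 := by
    rw [hN]
    simp only [h0, sub_zero, one_pow, Finset.sum_const, Finset.card_range, nsmul_eq_mul, mul_one]
    have h1t : (1:ℕ) ≤ t := by omega
    rw [Nat.cast_sub h1t]; norm_num
  have hD0 : D 0 = (b:ℝ) * ((b:ℝ) - 1) / 2 := by
    rw [hD]
    simp only [h0, sub_zero, one_pow, Finset.sum_const, Finset.card_range, nsmul_eq_mul,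
      mul_one, Nat.cast_add, Nat.cast_one]
    have key : ∀ m : ℕ, (∑ j ∈ Finset.range m, ((j:ℝ) + 1)) = (m:ℝ) * ((m:ℝ) + 1) / 2 := by
      intro m
      induction m with
      | zero => simp
      | succ k ih => rw [Finset.sum_range_succ, ih]; push_cast; ring
    have := key (b-1)
    have hb1 : ((b-1 : ℕ) : ℝ) = (b:ℝ) - 1 := by
      have h1b : (1:ℕ) ≤ b := by omega
      rw [Nat.cast_sub h1b]; norm_num
    rw [hb1] at this
    calc (∑ j ∈ Finset.range (b-1), ((j:ℝ) + 1)) = ((b:ℝ)-1) * ((b:ℝ)-1+1) / 2 := this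
      _ = (b:ℝ) * ((b:ℝ) - 1) / 2 := by ring
  have hD0ne : D 0 ≠ 0 := by
    rw [hD0]
    have hbR : (2:ℝ) ≤ (b:ℝ) := by exact_mod_cast hb
    have : (0:ℝ) < (b:ℝ) * ((b:ℝ) - 1) / 2 := by nlinarith
    exact this.ne'
  have hlim : Tendsto (fun γ => N γ / D γ) (nhdsWithin 0 (Ioi 0))
      (nhds (2 * ((t : ℝ) - 1) / ((b : ℝ) * ((b : ℝ) - 1)))) := by
    have : Tendsto (fun γ => N γ / D γ) (nhds 0) (nhds (N 0 / D 0)) :=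
      (hNcont.tendsto 0).div (hDcont.tendsto 0) hD0ne
    have hval : N 0 / D 0 = 2 * ((t : ℝ) - 1) / ((b : ℝ) * ((b : ℝ) - 1)) := by
      rw [hN0, hD0]
      have hbR : (2:ℝ) ≤ (b:ℝ) := by exact_mod_cast hb
      have h1 : (b:ℝ) ≠ 0 := by linarith
      have h2 : (b:ℝ) - 1 ≠ 0 := by linarith
      field_simp
    rw [hval] at this
    exact this.mono_left nhdsWithin_le_nhds
  exact hlim.congr' (eventually_nhdsWithin_of_forall fun γ hγ => (heq γ hγ).symm)
end

section
/- Fix integers n ≥ 1 and b ≥ 3, and define ψ_2(γ) = γ^n / (b−1 − γ^{−n}(1−γ^n)(1−(1−γ^n)^{b−1})) for γ ∈ (0,1). Then ψ_2(γ) < 1/(b−1) for every γ ∈ (0,1). -/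
lemma strict_bernoulli (x : ℝ) (hx0 : 0 < x) (hx1 : x < 1) :
    ∀ m : ℕ, 2 ≤ m → 1 - (m : ℝ) * x < (1 - x) ^ m := by
  intro m hm
  induction m, hm using Nat.le_induction with
  | base => push_cast; nlinarith [mul_pos hx0 hx0]
  | succ m hm ih =>
    have h1 : (0:ℝ) < 1 - x := by linarith
    have := mul_lt_mul_of_pos_right ih h1
    rw [pow_succ]
    push_cast
    nlinarith [mul_pos hx0 hx0, Nat.cast_nonneg (α := ℝ) m]

/-- The posterior probability of being in group `2` after observing a defection,
`ψ_2(γ) = γ^n / (b−1 − γ^{−n}(1−γ^n)(1−(1−γ^n)^(b−1)))`, is strictly below the uniform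
weight `1/(b−1)` for all `γ ∈ (0,1)`. -/
theorem psi_two_below_uniform
    (n b : ℕ) (hn : 1 ≤ n) (hb : 3 ≤ b) (γ : ℝ) (hγ : γ ∈ Set.Ioo (0 : ℝ) 1) :
    γ ^ n / ((b : ℝ) - 1 - (γ ^ n)⁻¹ * (1 - γ ^ n) * (1 - (1 - γ ^ n) ^ (b - 1)))
      < 1 / ((b : ℝ) - 1) := by
  obtain ⟨hγ0, hγ1⟩ := hγ
  set x : ℝ := γ ^ n with hxdef
  have hx0 : 0 < x := pow_pos hγ0 n
  have hx1 : x < 1 := pow_lt_one₀ hγ0.le hγ1 (by omega)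
  have hmcast : ((b - 1 : ℕ) : ℝ) = (b : ℝ) - 1 := by
    have : 1 ≤ b := by omega
    push_cast [this]; ring
  have hbern : 1 - ((b : ℝ) - 1) * x < (1 - x) ^ (b - 1) := by
    have := strict_bernoulli x hx0 hx1 (b - 1) (by omega)
    rwa [hmcast] at this
  -- key: 1 - (1-x)^(b-1) < (b-1) * x
  have hkey : 1 - (1 - x) ^ (b - 1) < ((b : ℝ) - 1) * x := by linarith
  have hb1 : (0:ℝ) < (b : ℝ) - 1 := by
    have : (3:ℝ) ≤ b := by exact_mod_cast hb
    linarith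
  -- bound the subtracted term
  have hsub : x⁻¹ * (1 - x) * (1 - (1 - x) ^ (b - 1)) < ((b : ℝ) - 1) * (1 - x) := by
    have h1 : 0 < x⁻¹ * (1 - x) := mul_pos (inv_pos.mpr hx0) (by linarith)
    have := mul_lt_mul_of_pos_left hkey h1
    calc x⁻¹ * (1 - x) * (1 - (1 - x) ^ (b - 1))
        < x⁻¹ * (1 - x) * (((b : ℝ) - 1) * x) := this
      _ = ((b : ℝ) - 1) * (1 - x) * (x⁻¹ * x) := by ring
      _ = ((b : ℝ) - 1) * (1 - x) := by
          rw [inv_mul_cancel₀ hx0.ne']; ring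
  set D : ℝ := (b : ℝ) - 1 - x⁻¹ * (1 - x) * (1 - (1 - x) ^ (b - 1)) with hD
  have hDgt : ((b : ℝ) - 1) * x < D := by
    have : ((b : ℝ) - 1) - ((b : ℝ) - 1) * (1 - x) = ((b : ℝ) - 1) * x := by ring
    rw [hD]; nlinarith
  have hDpos : 0 < D := lt_trans (by positivity) hDgt
  rw [div_lt_div_iff₀ hDpos hb1]
  linarith
end

section
/- Fix integers n ≥ 1 and b ≥ 3, and for γ ∈ (0,1) and 2 ≤ t ≤ b define φ_t(γ) = n(1−γ)(1−(1−γ^n)^{b−t})/γ + 1, φ̃_t(γ) = n(1−γ)(1−(1−γ^n)^{b−t})/γ^n + 1, and ψ_t(γ) = (1−(1−γ^n)^{t−1}) / (b−1 − γ^{−n}(1−γ^n)(1−(1−γ^n)^{b−1})). Then for every γ ∈ (0,1): (1/(b−1)) Σ_{t=2}^{b} φ̃_t(γ) ≥ Σ_{t=2}^{b} ψ_t(γ) φ_t(γ). -/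
/-- Comparison of expected gains: the uniform average over positions of `φ̃_t(γ)` is at
least the `ψ_t(γ)`-weighted average of `φ_t(γ)`:
`(1/(b−1)) Σ_{t=2}^{b} φ̃_t(γ) ≥ Σ_{t=2}^{b} ψ_t(γ) φ_t(γ)` for all `γ ∈ (0,1)`. -/
theorem uniform_average_ge_posterior_average
    (n b : ℕ) (hn : 1 ≤ n) (hb : 3 ≤ b) (γ : ℝ) (hγ : γ ∈ Set.Ioo (0 : ℝ) 1) :
    (1 / ((b : ℝ) - 1)) *
        ∑ t ∈ Finset.Icc 2 b,
          ((n : ℝ) * (1 - γ) * (1 - (1 - γ ^ n) ^ (b - t)) / γ ^ n + 1)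
      ≥ ∑ t ∈ Finset.Icc 2 b,
          ((1 - (1 - γ ^ n) ^ (t - 1)) /
              ((b : ℝ) - 1 - (γ ^ n)⁻¹ * (1 - γ ^ n) * (1 - (1 - γ ^ n) ^ (b - 1)))) *
            ((n : ℝ) * (1 - γ) * (1 - (1 - γ ^ n) ^ (b - t)) / γ + 1) := by
  obtain ⟨hγ0, hγ1⟩ := hγ
  have hx0 : (0:ℝ) < γ ^ n := pow_pos hγ0 n
  have hx1 : γ ^ n < 1 := pow_lt_one₀ hγ0.le hγ1 (by omega)
  have hxγ : γ ^ n ≤ γ := by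
    calc γ ^ n ≤ γ ^ 1 := pow_le_pow_of_le_one hγ0.le hγ1.le hn
    _ = γ := pow_one γ
  set x : ℝ := γ ^ n with hxdef
  set q : ℝ := 1 - x with hqdef
  have hq0 : (0:ℝ) ≤ q := by rw [hqdef]; linarith
  have hq1 : q < 1 := by rw [hqdef]; linarith
  have hqne : q ≠ 1 := ne_of_lt hq1
  set s := Finset.Icc 2 b with hs
  set w : ℕ → ℝ := fun t => 1 - q ^ (t - 1) with hw
  set A : ℕ → ℝ := fun t => 1 - q ^ (b - t) with hA
  set c : ℝ := (n : ℝ) * (1 - γ) with hc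
  have hc0 : 0 ≤ c := mul_nonneg (by positivity) (by linarith)
  have hb1 : (0:ℝ) < (b:ℝ) - 1 := by
    have : (3:ℝ) ≤ (b:ℝ) := by exact_mod_cast hb
    linarith
  have hcard : (s.card : ℝ) = (b:ℝ) - 1 := by
    rw [hs, Nat.card_Icc, Nat.cast_sub (by omega)]
    push_cast; ring
  -- geometric sum identity
  have hsum_q : ∑ t ∈ s, q ^ (t - 1) = q * ∑ i ∈ Finset.range (b - 1), q ^ i := by
    rw [hs, ← Finset.Ico_add_one_right_eq_Icc, Finset.sum_Ico_eq_sum_range, Finset.mul_sum]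
    have hb1' : b + 1 - 2 = b - 1 := by omega
    rw [hb1']
    refine Finset.sum_congr rfl fun i _ => ?_
    have h2 : 2 + i - 1 = i + 1 := by omega
    rw [h2, pow_succ]; ring
  have hgeom : ∑ i ∈ Finset.range (b - 1), q ^ i = (q ^ (b - 1) - 1) / (q - 1) :=
    geom_sum_eq hqne _
  have hD : ∑ t ∈ s, w t = (b:ℝ) - 1 - x⁻¹ * q * (1 - q ^ (b - 1)) := by
    have h1 : ∑ t ∈ s, w t = (s.card : ℝ) - ∑ t ∈ s, q ^ (t - 1) := by
      rw [hw, Finset.sum_sub_distrib, Finset.sum_const, nsmul_eq_mul, mul_one]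
    rw [h1, hcard, hsum_q, hgeom]
    have hq1' : q - 1 = -x := by rw [hqdef]; ring
    rw [hq1', div_neg, mul_neg, sub_neg_eq_add, div_eq_mul_inv]
    ring
  -- positivity of sums
  have hSWpos : 0 < ∑ t ∈ s, w t := by
    refine Finset.sum_pos (fun t ht => ?_) ⟨2, Finset.mem_Icc.2 ⟨le_refl 2, by omega⟩⟩
    have ht2 : 2 ≤ t := (Finset.mem_Icc.1 ht).1
    have : q ^ (t - 1) < 1 := pow_lt_one₀ hq0 hq1 (by omega)
    simp only [hw]; linarith
  have hw0 : ∀ t, 0 ≤ w t := by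
    intro t
    have : q ^ (t - 1) ≤ 1 := pow_le_one₀ hq0 hq1.le
    simp only [hw]; linarith
  have hA0 : ∀ t, 0 ≤ A t := by
    intro t
    have : q ^ (b - t) ≤ 1 := pow_le_one₀ hq0 hq1.le
    simp only [hA]; linarith
  have hSA0 : 0 ≤ ∑ t ∈ s, A t := Finset.sum_nonneg fun t _ => hA0 t
  have hSWA0 : 0 ≤ ∑ t ∈ s, w t * A t :=
    Finset.sum_nonneg fun t _ => mul_nonneg (hw0 t) (hA0 t)
  -- Chebyshev
  have hanti : AntivaryOn w A ↑s := by
    intro i _ j _ hij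
    rcases le_total i j with h | h
    · exfalso
      have : q ^ (b - i) ≤ q ^ (b - j) := pow_le_pow_of_le_one hq0 hq1.le (by omega)
      have : A j ≤ A i := by simp only [hA]; linarith
      exact absurd this (not_le.2 hij)
    · have : q ^ (i - 1) ≤ q ^ (j - 1) := pow_le_pow_of_le_one hq0 hq1.le (by omega)
      simp only [hw]; linarith
  have cheb : (s.card : ℝ) * ∑ t ∈ s, w t * A t ≤ (∑ t ∈ s, w t) * ∑ t ∈ s, A t :=
    hanti.card_mul_sum_le_sum_mul_sum
  have key : (∑ t ∈ s, w t * A t) / (∑ t ∈ s, w t) ≤ (∑ t ∈ s, A t) / ((b:ℝ) - 1) := by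
    rw [div_le_div_iff₀ hSWpos hb1]
    calc (∑ t ∈ s, w t * A t) * ((b:ℝ) - 1) = (s.card : ℝ) * ∑ t ∈ s, w t * A t := by
          rw [hcard]; ring
      _ ≤ (∑ t ∈ s, w t) * ∑ t ∈ s, A t := cheb
      _ = (∑ t ∈ s, A t) * ∑ t ∈ s, w t := by ring
  -- rewrite both sides
  have hL : ∑ t ∈ s, (c * (1 - q ^ (b - t)) / x + 1)
      = (c / x) * ∑ t ∈ s, A t + ((b:ℝ) - 1) := by
    rw [Finset.sum_add_distrib, Finset.sum_const, nsmul_eq_mul, mul_one, hcard,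
      Finset.mul_sum]
    congr 1
    refine Finset.sum_congr rfl fun t _ => ?_
    simp only [hA]; ring
  have hR : ∑ t ∈ s, ((1 - q ^ (t - 1)) / (∑ u ∈ s, w u) * (c * (1 - q ^ (b - t)) / γ + 1))
      = (c / γ) * ((∑ t ∈ s, w t * A t) / (∑ t ∈ s, w t)) + 1 := by
    have hterm : ∀ t ∈ s, (1 - q ^ (t - 1)) / (∑ u ∈ s, w u) * (c * (1 - q ^ (b - t)) / γ + 1)
        = (c / γ) * (w t * A t) / (∑ u ∈ s, w u) + w t / (∑ u ∈ s, w u) := by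
      intro t _
      simp only [hw, hA]
      ring
    rw [Finset.sum_congr rfl hterm, Finset.sum_add_distrib, ← Finset.sum_div, ← Finset.sum_div,
      ← Finset.mul_sum, div_self hSWpos.ne', mul_div_assoc]
  rw [← hD, hL, hR, ge_iff_le]
  have hcγ : c / γ ≤ c / x := by
    rw [div_le_div_iff₀ hγ0 hx0]
    exact mul_le_mul_of_nonneg_left hxγ hc0
  have step : (c / γ) * ((∑ t ∈ s, w t * A t) / (∑ t ∈ s, w t))
      ≤ (c / x) * ((∑ t ∈ s, A t) / ((b:ℝ) - 1)) :=
    mul_le_mul hcγ key (div_nonneg hSWA0 hSWpos.le) (div_nonneg hc0 hx0.le)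
  have : (c / x) * ((∑ t ∈ s, A t) / ((b:ℝ) - 1)) + 1
      = 1 / ((b:ℝ) - 1) * ((c / x) * ∑ t ∈ s, A t + ((b:ℝ) - 1)) := by
    field_simp
  linarith
end

section
/- Fix integers n ≥ 1 and b ≥ 3, and for γ ∈ (0,1) define F(γ) = Σ_{t=2}^{b} ψ_t(γ) φ_t(γ), where φ_t(γ) = n(1−γ)(1−(1−γ^n)^{b−t})/γ + 1 and ψ_t(γ) = (1−(1−γ^n)^{t−1}) / (b−1 − γ^{−n}(1−γ^n)(1−(1−γ^n)^{b−1})). Then F(γ) > 1 for every γ ∈ (0,1). -/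
/-- The posterior-weighted expected gain from contributing after observing a defection,
`F(γ) = Σ_{t=2}^{b} ψ_t(γ) φ_t(γ)`, exceeds `1` for every `γ ∈ (0,1)`. -/
theorem posterior_expected_gain_gt_one
    (n b : ℕ) (hn : 1 ≤ n) (hb : 3 ≤ b) (γ : ℝ) (hγ : γ ∈ Set.Ioo (0 : ℝ) 1) :
    1 < ∑ t ∈ Finset.Icc 2 b,
        ((1 - (1 - γ ^ n) ^ (t - 1)) /
            ((b : ℝ) - 1 - (γ ^ n)⁻¹ * (1 - γ ^ n) * (1 - (1 - γ ^ n) ^ (b - 1)))) *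
          ((n : ℝ) * (1 - γ) * (1 - (1 - γ ^ n) ^ (b - t)) / γ + 1) := by
  obtain ⟨hγ0, hγ1⟩ := hγ
  have hγn0 : 0 < γ ^ n := pow_pos hγ0 n
  have hγn1 : γ ^ n < 1 := pow_lt_one₀ hγ0.le hγ1 (by omega)
  set q : ℝ := 1 - γ ^ n with hq
  have hq0 : 0 < q := by simp only [hq]; linarith
  have hq1 : q < 1 := by simp only [hq]; linarith
  set D : ℝ := (b : ℝ) - 1 - (γ ^ n)⁻¹ * (1 - γ ^ n) * (1 - (1 - γ ^ n) ^ (b - 1)) with hD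
  -- geometric sum identity
  have hS : ∑ t ∈ Finset.Icc 2 b, q ^ (t - 1) = q * ((1 - q ^ (b - 1)) / (1 - q)) := by
    rw [← Finset.Ico_add_one_right_eq_Icc, Finset.sum_Ico_eq_sum_range]
    have h1 : ∀ i ∈ Finset.range (b + 1 - 2), q ^ (2 + i - 1) = q * q ^ i := by
      intro i _
      rw [show 2 + i - 1 = i + 1 by omega, pow_succ, mul_comm]
    rw [Finset.sum_congr rfl h1, ← Finset.mul_sum, geom_sum_eq (by linarith : q ≠ 1)]
    have : b + 1 - 2 = b - 1 := by omega
    rw [this]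
    congr 1
    rw [div_eq_div_iff (by linarith) (by linarith)]
    ring
  have hDsum : D = ∑ t ∈ Finset.Icc 2 b, (1 - q ^ (t - 1)) := by
    rw [Finset.sum_sub_distrib, Finset.sum_const, hS, Nat.card_Icc, hD]
    have h1q : (1 : ℝ) - q = γ ^ n := by simp [hq]
    have hcard : ((b + 1 - 2 : ℕ) : ℝ) = (b : ℝ) - 1 := by
      have : b + 1 - 2 = b - 1 := by omega
      rw [this]
      have hb1 : 1 ≤ b := by omega
      push_cast [hb1]
      ring
    rw [nsmul_eq_mul, hcard, mul_one]
    rw [← h1q]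
    rw [inv_mul_eq_div, div_mul_eq_mul_div]
    ring_nf
  have hD0 : 0 < D := by
    rw [hDsum]
    apply Finset.sum_pos
    · intro t ht
      simp only [Finset.mem_Icc] at ht
      have : q ^ (t - 1) < 1 := pow_lt_one₀ hq0.le hq1 (by omega)
      linarith
    · exact Finset.nonempty_Icc.mpr (by omega)
  -- rewrite each term as a/D form
  have hrw : ∀ t ∈ Finset.Icc 2 b,
      ((1 - q ^ (t - 1)) / D) * ((n : ℝ) * (1 - γ) * (1 - q ^ (b - t)) / γ + 1)
        = ((1 - q ^ (t - 1)) * ((n : ℝ) * (1 - γ) * (1 - q ^ (b - t)) / γ + 1)) / D := by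
    intro t _
    rw [div_mul_eq_mul_div]
  rw [Finset.sum_congr rfl hrw, ← Finset.sum_div, one_lt_div hD0]
  nth_rewrite 1 [hDsum]
  apply Finset.sum_lt_sum
  · intro t ht
    simp only [Finset.mem_Icc] at ht
    have h1 : q ^ (b - t) ≤ 1 := pow_le_one₀ hq0.le hq1.le
    have h2 : 0 ≤ (n : ℝ) * (1 - γ) * (1 - q ^ (b - t)) / γ := by
      apply div_nonneg _ hγ0.le
      apply mul_nonneg (mul_nonneg (by positivity) (by linarith))
      linarith
    have h3 : q ^ (t - 1) < 1 := pow_lt_one₀ hq0.le hq1 (by omega)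
    nlinarith
  · refine ⟨2, Finset.mem_Icc.mpr ⟨le_refl 2, by omega⟩, ?_⟩
    have h1 : q ^ (b - 2) < 1 := pow_lt_one₀ hq0.le hq1 (by omega)
    have h2 : 0 < (n : ℝ) * (1 - γ) * (1 - q ^ (b - 2)) / γ := by
      apply div_pos _ hγ0
      apply mul_pos (mul_pos (by positivity) (by linarith))
      linarith
    have h3 : q ^ (2 - 1) < 1 := pow_lt_one₀ hq0.le hq1 (by omega)
    have h4 : 0 < 1 - q ^ (2 - 1) := by linarith
    nlinarith
end

section
/- Fix integers n ≥ 2 and b ≥ 3, and for γ ∈ (0,1) define F(γ) = Σ_{t=2}^{b} ψ_t(γ) φ_t(γ), where φ_t(γ) = n(1−γ)(1−(1−γ^n)^{b−t})/γ + 1 and ψ_t(γ) = (1−(1−γ^n)^{t−1}) / (b−1 − γ^{−n}(1−γ^n)(1−(1−γ^n)^{b−1})). Then F(γ) → 1 as γ → 0⁺. -/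
open Filter Set

/-- Partial geometric sum `∑_{i<k} (1-x)^i`. -/
def Pgs (k : ℕ) (x : ℝ) : ℝ := ∑ i ∈ Finset.range k, (1 - x) ^ i

/-- Factor of the denominator after pulling out `x`. -/
def Rgs (b : ℕ) (x : ℝ) : ℝ := (∑ j ∈ Finset.range (b - 1), Pgs j x) + Pgs (b - 1) x

lemma key1 (k : ℕ) (x : ℝ) : 1 - (1 - x) ^ k = x * Pgs k x := by
  have h := geom_sum_mul (1 - x) k
  unfold Pgs
  linear_combination h

lemma key2' (m : ℕ) (x : ℝ) :
    (m : ℝ) - (1 - x) * Pgs m x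
      = x * ((∑ j ∈ Finset.range m, Pgs j x) + Pgs m x) := by
  induction m with
  | zero => simp [Pgs]
  | succ m ih =>
      have h1 := key1 (m + 1) x
      have hP : Pgs (m + 1) x = Pgs m x + (1 - x) ^ m := by
        simp [Pgs, Finset.sum_range_succ]
      rw [hP] at h1
      rw [Finset.sum_range_succ, hP]
      push_cast
      linear_combination ih + h1

lemma gauss (m : ℕ) : (∑ j ∈ Finset.range m, (j : ℝ)) * 2 = (m : ℝ) * ((m : ℝ) - 1) := by
  induction m with
  | zero => simp
  | succ m ih =>
      rw [Finset.sum_range_succ]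
      push_cast
      linear_combination ih

lemma gauss2 (b : ℕ) (hb : 2 ≤ b) :
    (∑ t ∈ Finset.Icc 2 b, ((t - 1 : ℕ) : ℝ)) = (b : ℝ) * ((b : ℝ) - 1) / 2 := by
  induction b with
  | zero => omega
  | succ b ih =>
      rcases Nat.lt_or_ge b 2 with h | h
      · interval_cases b
        · omega
        · norm_num
      · rw [Finset.sum_Icc_succ_top (by omega : 2 ≤ b + 1), ih h]
        have : ((b + 1 - 1 : ℕ) : ℝ) = (b : ℝ) := by
          norm_num
        rw [this]
        push_cast
        ring

lemma Pgs_continuous (k n : ℕ) : Continuous fun γ : ℝ => Pgs k (γ ^ n) := by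
  unfold Pgs
  exact continuous_finset_sum _ fun i _ => by fun_prop

lemma Pgs_zero (k : ℕ) : Pgs k 0 = (k : ℝ) := by simp [Pgs]

/-- For group size `n ≥ 2`, the posterior-weighted expected gain from contributing after a
defection, `F(γ) = Σ_{t=2}^{b} ψ_t(γ) φ_t(γ)`, tends to `1` as `γ → 0⁺`. -/
theorem posterior_expected_gain_limit_at_zero
    (n b : ℕ) (hn : 2 ≤ n) (hb : 3 ≤ b) :
    Tendsto (fun γ : ℝ =>
        ∑ t ∈ Finset.Icc 2 b,
          ((1 - (1 - γ ^ n) ^ (t - 1)) /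
              ((b : ℝ) - 1 - (γ ^ n)⁻¹ * (1 - γ ^ n) * (1 - (1 - γ ^ n) ^ (b - 1)))) *
            ((n : ℝ) * (1 - γ) * (1 - (1 - γ ^ n) ^ (b - t)) / γ + 1))
      (nhdsWithin 0 (Ioi 0)) (nhds 1) := by
  have hb1 : (1 : ℕ) ≤ b := by omega
  have hbR : (3 : ℝ) ≤ (b : ℝ) := by exact_mod_cast hb
  have hbne : (b : ℝ) ≠ 0 := by linarith
  have hbne1 : (b : ℝ) - 1 ≠ 0 := by linarith
  -- the simplified form of each summand
  set G : ℕ → ℝ → ℝ := fun t γ =>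
    Pgs (t - 1) (γ ^ n) / Rgs b (γ ^ n) *
      ((n : ℝ) * (1 - γ) * γ ^ (n - 1) * Pgs (b - t) (γ ^ n) + 1) with hG
  -- value of Rgs at 0
  have hR0 : Rgs b 0 = (b : ℝ) * ((b : ℝ) - 1) / 2 := by
    unfold Rgs
    simp only [Pgs_zero]
    rw [← Nat.cast_sum]
    have h2 := gauss (b - 1)
    have hc : ((b - 1 : ℕ) : ℝ) = (b : ℝ) - 1 := by
      rw [Nat.cast_sub hb1, Nat.cast_one]
    rw [hc] at h2
    have hs : (∑ j ∈ Finset.range (b - 1), (j : ℝ)) = ((b : ℝ) - 1) * ((b : ℝ) - 2) / 2 := by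
      linarith
    rw [show ((∑ j ∈ Finset.range (b - 1), j : ℕ) : ℝ)
          = ∑ j ∈ Finset.range (b - 1), (j : ℝ) by push_cast; ring, hs, hc]
    ring
  have hRne : Rgs b 0 ≠ 0 := by
    rw [hR0]
    have : (0 : ℝ) < (b : ℝ) * ((b : ℝ) - 1) / 2 := by nlinarith
    exact ne_of_gt this
  -- per-term limits
  have hterm : ∀ t ∈ Finset.Icc 2 b,
      Tendsto (G t) (nhdsWithin 0 (Ioi 0))
        (nhds (((t - 1 : ℕ) : ℝ) * (2 / ((b : ℝ) * ((b : ℝ) - 1))))) := by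
    intro t _
    have hcont : ContinuousAt (G t) 0 := by
      rw [hG]
      apply ContinuousAt.mul
      · apply ContinuousAt.div
        · exact (Pgs_continuous _ n).continuousAt
        · exact ((continuous_finset_sum _ fun j _ => Pgs_continuous j n).add
            (Pgs_continuous _ n)).continuousAt
        · simpa [Rgs, zero_pow (show n ≠ 0 by omega)] using hRne
      · exact (((by fun_prop : Continuous fun γ : ℝ => (n : ℝ) * (1 - γ) * γ ^ (n - 1)).mul
          (Pgs_continuous _ n)).add continuous_const).continuousAt
    have hval : G t 0 = ((t - 1 : ℕ) : ℝ) * (2 / ((b : ℝ) * ((b : ℝ) - 1))) := by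
      rw [hG]
      simp only [zero_pow (show n ≠ 0 by omega), zero_pow (show n - 1 ≠ 0 by omega),
        Pgs_zero, hR0, mul_zero, zero_mul, zero_add, mul_one, sub_zero]
      field_simp
    rw [← hval]
    exact hcont.tendsto.mono_left nhdsWithin_le_nhds
  have hsum := tendsto_finset_sum (Finset.Icc 2 b) hterm
  have hlim : (∑ t ∈ Finset.Icc 2 b,
      ((t - 1 : ℕ) : ℝ) * (2 / ((b : ℝ) * ((b : ℝ) - 1)))) = 1 := by
    rw [← Finset.sum_mul, gauss2 b (by omega)]
    field_simp
  rw [hlim] at hsum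
  -- eventual equality of the original sum with the simplified one
  refine Tendsto.congr' ?_ hsum
  filter_upwards [self_mem_nhdsWithin] with γ hγ
  have hγ0 : (0 : ℝ) < γ := hγ
  have hγne : γ ≠ 0 := ne_of_gt hγ0
  have hx : γ ^ n ≠ 0 := pow_ne_zero _ hγne
  refine Finset.sum_congr rfl fun t _ => ?_
  rw [hG]
  simp only [key1]
  have hd : (γ ^ n)⁻¹ * (1 - γ ^ n) * (γ ^ n * Pgs (b - 1) (γ ^ n))
      = (1 - γ ^ n) * Pgs (b - 1) (γ ^ n) := by
    field_simp
  rw [hd]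
  have hk2 : (b : ℝ) - 1 - (1 - γ ^ n) * Pgs (b - 1) (γ ^ n) = γ ^ n * Rgs b (γ ^ n) := by
    have h := key2' (b - 1) (γ ^ n)
    rw [Nat.cast_sub hb1, Nat.cast_one] at h
    unfold Rgs
    linarith
  rw [hk2, mul_div_mul_left _ _ hx]
  have hpow : γ ^ n = γ ^ (n - 1) * γ := by
    rw [← pow_succ]
    congr 1
    omega
  have hdiv : γ ^ n / γ = γ ^ (n - 1) := by
    rw [hpow, mul_div_assoc, div_self hγne, mul_one]
  have hφ : (n : ℝ) * (1 - γ) * (γ ^ n * Pgs (b - t) (γ ^ n)) / γ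
      = (n : ℝ) * (1 - γ) * γ ^ (n - 1) * Pgs (b - t) (γ ^ n) := by
    rw [mul_div_assoc, mul_comm (γ ^ n), mul_div_assoc, hdiv]
    ring
  rw [hφ]
end

section
/- Fix integers n ≥ 2 and b ≥ 3 and set N = bn. For γ ∈ (0,1) define F(γ) = Σ_{t=2}^{b} ψ_t(γ) φ_t(γ), where φ_t(γ) = n(1−γ)(1−(1−γ^n)^{b−t})/γ + 1 and ψ_t(γ) = (1−(1−γ^n)^{t−1}) / (b−1 − γ^{−n}(1−γ^n)(1−(1−γ^n)^{b−1})). Then there exists r^♯ ∈ (0, N) such that: (i) there exists γ^♯ ∈ (0,1) with (r^♯/N)·F(γ^♯) = 1; and (ii) for every r with r^♯ < r < N there exist γ_1, γ_2 ∈ (0,1) with γ_1 ≠ γ_2 such that (r/N)·F(γ_1) = 1 and (r/N)·F(γ_2) = 1. -/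
open Finset Set

lemma geom_aux' (x : ℝ) (b : ℕ) :
    ∑ t ∈ Finset.Icc 2 b, (1-x)^(t-1) * x = (1-x) * (1 - (1-x)^(b-1)) := by
  induction b with
  | zero => simp
  | succ m ih =>
    rcases Nat.eq_zero_or_pos m with hm | hm
    · subst hm; simp
    · rw [Finset.sum_Icc_succ_top (by omega : 2 ≤ m+1), ih]
      obtain ⟨k, rfl⟩ : ∃ k, m = k + 1 := ⟨m - 1, by omega⟩
      simp only [Nat.add_sub_cancel]
      ring

lemma sumP' (x : ℝ) (hx : x ≠ 0) (b : ℕ) (hb : 2 ≤ b) :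
    (b:ℝ) - 1 - x⁻¹ * (1-x) * (1-(1-x)^(b-1)) = ∑ t ∈ Finset.Icc 2 b, (1 - (1-x)^(t-1)) := by
  have h2 : (∑ t ∈ Finset.Icc 2 b, (1-x)^(t-1)) * x = (1-x) * (1 - (1-x)^(b-1)) := by
    rw [Finset.sum_mul]; exact geom_aux' x b
  have h3 : (∑ t ∈ Finset.Icc 2 b, (1-x)^(t-1)) = x⁻¹ * ((1-x) * (1 - (1-x)^(b-1))) := by
    field_simp
    linarith [h2]
  rw [Finset.sum_sub_distrib, h3, Finset.sum_const, Nat.card_Icc]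
  have : ((b + 1 - 2 : ℕ) : ℝ) = (b:ℝ) - 1 := by
    have h : b + 1 - 2 = b - 1 := by omega
    rw [h, Nat.cast_sub (by omega)]; simp
  rw [nsmul_eq_mul, this]; ring

noncomputable def Fg (n b : ℕ) (γ : ℝ) : ℝ :=
  ∑ t ∈ Finset.Icc 2 b,
    ((1 - (1 - γ ^ n) ^ (t - 1)) /
        ((b : ℝ) - 1 - (γ ^ n)⁻¹ * (1 - γ ^ n) * (1 - (1 - γ ^ n) ^ (b - 1)))) *
      ((n : ℝ) * (1 - γ) * (1 - (1 - γ ^ n) ^ (b - t)) / γ + 1)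

noncomputable def Dg (n b : ℕ) (γ : ℝ) : ℝ :=
  ∑ t ∈ Finset.Icc 2 b, (1 - (1 - γ^n)^(t-1))

noncomputable def Φg (n b : ℕ) (γ : ℝ) (t : ℕ) : ℝ :=
  (n:ℝ)*(1-γ)*(1-(1-γ^n)^(b-t))/γ + 1

section facts

variable {n b : ℕ} {γ : ℝ}

lemma x_mem (hn : 2 ≤ n) (hγ : γ ∈ Set.Ioo (0:ℝ) 1) : γ^n ∈ Set.Ioo (0:ℝ) 1 :=
  ⟨pow_pos hγ.1 n, pow_lt_one₀ hγ.1.le hγ.2 (by omega)⟩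

lemma den_eq (hn : 2 ≤ n) (hb : 3 ≤ b) (hγ : γ ∈ Set.Ioo (0:ℝ) 1) :
    (b:ℝ) - 1 - (γ^n)⁻¹ * (1-γ^n) * (1-(1-γ^n)^(b-1)) = Dg n b γ :=
  sumP' (γ^n) (pow_ne_zero n hγ.1.ne') b (by omega)

lemma Ppos (hn : 2 ≤ n) (hγ : γ ∈ Set.Ioo (0:ℝ) 1) :
    ∀ t ∈ Finset.Icc 2 b, 0 < 1 - (1 - γ^n)^(t-1) := by
  intro t ht
  rw [Finset.mem_Icc] at ht
  have hx := x_mem hn hγ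
  have h1 : (1 - γ^n)^(t-1) < 1 :=
    pow_lt_one₀ (by linarith [hx.2]) (by linarith [hx.1]) (by omega)
  linarith

lemma Dpos (hn : 2 ≤ n) (hb : 3 ≤ b) (hγ : γ ∈ Set.Ioo (0:ℝ) 1) : 0 < Dg n b γ :=
  Finset.sum_pos (Ppos hn hγ) (Finset.nonempty_Icc.mpr (by omega))

lemma Φ_ge_one (hn : 2 ≤ n) (hγ : γ ∈ Set.Ioo (0:ℝ) 1) (t : ℕ) : 1 ≤ Φg n b γ t := by
  have hx := x_mem hn hγ
  have h1 : (1 - γ^n)^(b-t) ≤ 1 := pow_le_one₀ (by linarith [hx.2]) (by linarith [hx.1])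
  have h0 : 0 ≤ (n:ℝ)*(1-γ)*(1-(1-γ^n)^(b-t))/γ :=
    div_nonneg (mul_nonneg (mul_nonneg (by positivity) (by linarith [hγ.2])) (by linarith)) hγ.1.le
  unfold Φg; linarith

lemma Fg_eq (hn : 2 ≤ n) (hb : 3 ≤ b) (hγ : γ ∈ Set.Ioo (0:ℝ) 1) :
    Fg n b γ = (∑ t ∈ Finset.Icc 2 b, (1 - (1 - γ^n)^(t-1)) * Φg n b γ t) / Dg n b γ := by
  unfold Fg Φg
  simp only [den_eq hn hb hγ]
  rw [Finset.sum_div]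
  exact Finset.sum_congr rfl (fun t ht => by rw [div_mul_eq_mul_div])

lemma Fg_gt_one (hn : 2 ≤ n) (hb : 3 ≤ b) (hγ : γ ∈ Set.Ioo (0:ℝ) 1) : 1 < Fg n b γ := by
  rw [Fg_eq hn hb hγ, one_lt_div (Dpos hn hb hγ)]
  have h2 : (2 : ℕ) ∈ Finset.Icc 2 b := Finset.mem_Icc.mpr ⟨le_rfl, by omega⟩
  have hΦ2 : 1 < Φg n b γ 2 := by
    have hx := x_mem hn hγ
    have h1 : (1 - γ^n)^(b-2) < 1 :=
      pow_lt_one₀ (by linarith [hx.2]) (by linarith [hx.1]) (by omega)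
    have h0 : 0 < (n:ℝ)*(1-γ)*(1-(1-γ^n)^(b-2))/γ := by
      apply div_pos _ hγ.1
      apply mul_pos (mul_pos _ (by linarith [hγ.2])) (by linarith)
      have : (0:ℝ) < n := by positivity
      exact this
    unfold Φg; linarith
  exact Finset.sum_lt_sum
    (fun i hi => le_mul_of_one_le_right (Ppos hn hγ i hi).le (Φ_ge_one hn hγ i))
    ⟨2, h2, lt_mul_of_one_lt_right (Ppos hn hγ 2 h2) hΦ2⟩

lemma Fg_le (hn : 2 ≤ n) (hb : 3 ≤ b) (hγ : γ ∈ Set.Ioo (0:ℝ) 1) (K : ℝ)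
    (hK : ∀ t ∈ Finset.Icc 2 b, Φg n b γ t ≤ K) : Fg n b γ ≤ K := by
  rw [Fg_eq hn hb hγ, div_le_iff₀ (Dpos hn hb hγ)]
  calc ∑ t ∈ Finset.Icc 2 b, (1 - (1 - γ^n)^(t-1)) * Φg n b γ t
      ≤ ∑ t ∈ Finset.Icc 2 b, (1 - (1 - γ^n)^(t-1)) * K :=
        Finset.sum_le_sum (fun i hi => mul_le_mul_of_nonneg_left (hK i hi) (Ppos hn hγ i hi).le)
    _ = K * Dg n b γ := by rw [← Finset.sum_mul]; unfold Dg; ring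

lemma bernoulli_aux (hn : 2 ≤ n) (hγ : γ ∈ Set.Ioo (0:ℝ) 1) (k : ℕ) :
    1 - (1 - γ^n)^k ≤ (k:ℝ) * γ^n := by
  have hx := x_mem hn hγ
  have h := one_add_mul_le_pow (show (-2:ℝ) ≤ -γ^n by linarith [hx.2]) k
  have h2 : (1 : ℝ) + (k:ℝ) * (-γ^n) ≤ (1 - γ^n)^k := by
    rw [sub_eq_add_neg]; exact h
  nlinarith

lemma boundA (hn : 2 ≤ n) (hb : 3 ≤ b) (hγ : γ ∈ Set.Ioo (0:ℝ) 1) :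
    Fg n b γ ≤ 1 + (n:ℝ) * b * γ := by
  apply Fg_le hn hb hγ
  intro t ht
  have hx := x_mem hn hγ
  have hber := bernoulli_aux hn hγ (b - t)
  have hcast : ((b - t : ℕ) : ℝ) ≤ (b : ℝ) := by exact_mod_cast Nat.sub_le b t
  have hA0 : 0 ≤ 1 - (1 - γ^n)^(b-t) := by
    have : (1 - γ^n)^(b-t) ≤ 1 := pow_le_one₀ (by linarith [hx.2]) (by linarith [hx.1])
    linarith
  have hA : 1 - (1 - γ^n)^(b-t) ≤ (b:ℝ) * γ^n := by
    have : ((b - t : ℕ) : ℝ) * γ^n ≤ (b:ℝ) * γ^n :=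
      mul_le_mul_of_nonneg_right hcast hx.1.le
    linarith
  have hgn : γ^n ≤ γ^2 := pow_le_pow_of_le_one hγ.1.le hγ.2.le hn
  have key : (n:ℝ)*(1-γ)*(1-(1-γ^n)^(b-t))/γ ≤ (n:ℝ)*b*γ := by
    rw [div_le_iff₀ hγ.1]
    have hn0 : (0:ℝ) ≤ n := by positivity
    have hb0 : (0:ℝ) ≤ b := by positivity
    nlinarith [mul_le_mul_of_nonneg_left hA hn0,
      mul_le_mul_of_nonneg_left hgn (mul_nonneg hn0 hb0),
      mul_nonneg (mul_nonneg hn0 hγ.1.le) hA0]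
  unfold Φg; linarith

lemma boundB (hn : 2 ≤ n) (hb : 3 ≤ b) (hγ : γ ∈ Set.Ioo (0:ℝ) 1) (hhalf : 1/2 ≤ γ) :
    Fg n b γ ≤ 1 + 2*(n:ℝ)*(1-γ) := by
  apply Fg_le hn hb hγ
  intro t ht
  have hx := x_mem hn hγ
  have hA0 : 0 ≤ 1 - (1 - γ^n)^(b-t) := by
    have : (1 - γ^n)^(b-t) ≤ 1 := pow_le_one₀ (by linarith [hx.2]) (by linarith [hx.1])
    linarith
  have hA1 : 1 - (1 - γ^n)^(b-t) ≤ 1 := by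
    have : 0 ≤ (1 - γ^n)^(b-t) := pow_nonneg (by linarith [hx.2]) _
    linarith
  have key : (n:ℝ)*(1-γ)*(1-(1-γ^n)^(b-t))/γ ≤ 2*(n:ℝ)*(1-γ) := by
    rw [div_le_iff₀ hγ.1]
    have hn0 : (0:ℝ) ≤ n := by positivity
    nlinarith [mul_le_mul_of_nonneg_left hA1 (mul_nonneg hn0 (by linarith [hγ.2] : (0:ℝ) ≤ 1 - γ)),
      mul_nonneg (mul_nonneg hn0 (by linarith [hγ.2] : (0:ℝ) ≤ 1 - γ)) (by linarith : (0:ℝ) ≤ 2*γ - 1)]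
  unfold Φg; linarith

lemma Fg_cont (hn : 2 ≤ n) (hb : 3 ≤ b) : ContinuousOn (Fg n b) (Set.Ioo (0:ℝ) 1) := by
  unfold Fg
  apply continuousOn_finset_sum
  intro t ht
  apply ContinuousOn.mul
  · apply ContinuousOn.div
    · fun_prop
    · apply ContinuousOn.sub (by fun_prop)
      apply ContinuousOn.mul
      · apply ContinuousOn.mul _ (by fun_prop)
        exact ContinuousOn.inv₀ (by fun_prop) (fun γ hγ => pow_ne_zero n hγ.1.ne')
      · fun_prop
    · intro γ hγ
      rw [den_eq hn hb hγ]
      exact (Dpos hn hb hγ).ne'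
  · apply ContinuousOn.add _ continuousOn_const
    exact ContinuousOn.div (by fun_prop) continuousOn_id (fun γ hγ => hγ.1.ne')

end facts

/-- Analytic core of the mixed-strategy theorem: with `N = bn` and
`F(γ) = Σ_{t=2}^{b} ψ_t(γ) φ_t(γ)`, there is a threshold return `r^♯ ∈ (0, N)` such that
(i) for some `γ^♯ ∈ (0,1)` the indifference condition `(r^♯/N)·F(γ^♯) = 1` holds, and
(ii) for every `r` with `r^♯ < r < N` there are two distinct `γ₁, γ₂ ∈ (0,1)` with
`(r/N)·F(γ₁) = 1` and `(r/N)·F(γ₂) = 1`. -/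
theorem mixed_strategy_indifference_thresholds
    (n b : ℕ) (hn : 2 ≤ n) (hb : 3 ≤ b) :
    ∃ rs : ℝ, rs ∈ Set.Ioo (0 : ℝ) ((b : ℝ) * n) ∧
      (∃ γs ∈ Set.Ioo (0 : ℝ) 1,
        (rs / ((b : ℝ) * n)) *
          (∑ t ∈ Finset.Icc 2 b,
            ((1 - (1 - γs ^ n) ^ (t - 1)) /
                ((b : ℝ) - 1 - (γs ^ n)⁻¹ * (1 - γs ^ n) * (1 - (1 - γs ^ n) ^ (b - 1)))) *
              ((n : ℝ) * (1 - γs) * (1 - (1 - γs ^ n) ^ (b - t)) / γs + 1)) = 1) ∧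
      (∀ r : ℝ, rs < r → r < (b : ℝ) * n →
        ∃ γ₁ ∈ Set.Ioo (0 : ℝ) 1, ∃ γ₂ ∈ Set.Ioo (0 : ℝ) 1, γ₁ ≠ γ₂ ∧
          (r / ((b : ℝ) * n)) *
            (∑ t ∈ Finset.Icc 2 b,
              ((1 - (1 - γ₁ ^ n) ^ (t - 1)) /
                  ((b : ℝ) - 1 - (γ₁ ^ n)⁻¹ * (1 - γ₁ ^ n) * (1 - (1 - γ₁ ^ n) ^ (b - 1)))) *
                ((n : ℝ) * (1 - γ₁) * (1 - (1 - γ₁ ^ n) ^ (b - t)) / γ₁ + 1)) = 1 ∧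
          (r / ((b : ℝ) * n)) *
            (∑ t ∈ Finset.Icc 2 b,
              ((1 - (1 - γ₂ ^ n) ^ (t - 1)) /
                  ((b : ℝ) - 1 - (γ₂ ^ n)⁻¹ * (1 - γ₂ ^ n) * (1 - (1 - γ₂ ^ n) ^ (b - 1)))) *
                ((n : ℝ) * (1 - γ₂) * (1 - (1 - γ₂ ^ n) ^ (b - t)) / γ₂ + 1)) = 1) := by
  have hNr : (0:ℝ) < (b:ℝ) * n := by positivity
  set Nr : ℝ := (b:ℝ) * n with hNrdef
  have hhalf : (1/2 : ℝ) ∈ Set.Ioo (0:ℝ) 1 := by norm_num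
  set c : ℝ := Fg n b (1/2) with hcdef
  have hc : 1 < c := Fg_gt_one hn hb hhalf
  have hc0 : (0:ℝ) < c := by linarith
  refine ⟨Nr / c, ⟨div_pos hNr hc0, div_lt_self hNr hc⟩, ⟨1/2, hhalf, ?_⟩, ?_⟩
  · show (Nr / c) / Nr * Fg n b (1/2) = 1
    rw [← hcdef]
    field_simp
  · intro r hr1 hr2
    have hr0 : (0:ℝ) < r := lt_trans (div_pos hNr hc0) hr1
    set v : ℝ := Nr / r with hvdef
    have hv1 : 1 < v := (one_lt_div hr0).mpr hr2
    have hvc : v < c := by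
      rw [hvdef, div_lt_iff₀ hr0]
      have := (div_lt_iff₀ hc0).mp hr1
      linarith
    -- left point
    set γa : ℝ := min (1/4) ((v-1)/(2*n*b)) with hγadef
    have hnb : (0:ℝ) < (n:ℝ) * b := by positivity
    have hγa0 : 0 < γa := lt_min (by norm_num) (div_pos (by linarith) (by positivity))
    have hγa4 : γa ≤ 1/4 := min_le_left _ _
    have hγam : γa ∈ Set.Ioo (0:ℝ) 1 := ⟨hγa0, by linarith⟩
    have hFa : Fg n b γa < v := by
      have h1 := boundA hn hb hγam
      have h2 : (n:ℝ)*b*γa ≤ (n:ℝ)*b*((v-1)/(2*n*b)) :=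
        mul_le_mul_of_nonneg_left (min_le_right _ _) hnb.le
      have h3 : (n:ℝ)*b*((v-1)/(2*n*b)) = (v-1)/2 := by
        field_simp
      linarith
    -- right point
    set γb : ℝ := 1 - min (1/4) ((v-1)/(4*n)) with hγbdef
    have hn0 : (0:ℝ) < n := by positivity
    have hmin0 : 0 < min (1/4) ((v-1)/(4*(n:ℝ))) :=
      lt_min (by norm_num) (div_pos (by linarith) (by positivity))
    have hmin4 : min (1/4) ((v-1)/(4*(n:ℝ))) ≤ 1/4 := min_le_left _ _
    have hγbm : γb ∈ Set.Ioo (0:ℝ) 1 := ⟨by rw [hγbdef]; linarith, by rw [hγbdef]; linarith⟩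
    have hγbhalf : (1/2:ℝ) ≤ γb := by rw [hγbdef]; linarith
    have hFb : Fg n b γb < v := by
      have h1 := boundB hn hb hγbm hγbhalf
      have h2 : 1 - γb = min (1/4) ((v-1)/(4*(n:ℝ))) := by rw [hγbdef]; ring
      have h5 : 4*(n:ℝ)*(1-γb) ≤ v - 1 := by
        rw [h2]
        calc 4*(n:ℝ)*(min (1/4) ((v-1)/(4*(n:ℝ)))) ≤ 4*(n:ℝ)*((v-1)/(4*(n:ℝ))) :=
              mul_le_mul_of_nonneg_left (min_le_right _ _) (by positivity)
          _ = v - 1 := by field_simp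
      linarith
    -- IVT on [γa, 1/2]
    have hsub1 : Set.Icc γa (1/2:ℝ) ⊆ Set.Ioo (0:ℝ) 1 :=
      fun y hy => ⟨lt_of_lt_of_le hγa0 hy.1, lt_of_le_of_lt hy.2 (by norm_num)⟩
    have hivt1 := intermediate_value_Icc (show γa ≤ 1/2 by linarith)
      ((Fg_cont hn hb).mono hsub1)
    obtain ⟨γ₁, hγ₁m, hγ₁⟩ := hivt1 (show v ∈ Set.Icc (Fg n b γa) (Fg n b (1/2)) from
      ⟨hFa.le, by rw [← hcdef]; exact hvc.le⟩)
    -- IVT on [1/2, γb]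
    have hsub2 : Set.Icc (1/2:ℝ) γb ⊆ Set.Ioo (0:ℝ) 1 :=
      fun y hy => ⟨lt_of_lt_of_le (by norm_num) hy.1, lt_of_le_of_lt hy.2 hγbm.2⟩
    have hivt2 := intermediate_value_Icc' hγbhalf ((Fg_cont hn hb).mono hsub2)
    obtain ⟨γ₂, hγ₂m, hγ₂⟩ := hivt2 (show v ∈ Set.Icc (Fg n b γb) (Fg n b (1/2)) from
      ⟨hFb.le, by rw [← hcdef]; exact hvc.le⟩)
    have hne : γ₁ ≠ γ₂ := by
      intro h
      have h12 : γ₁ = 1/2 := le_antisymm hγ₁m.2 (h ▸ hγ₂m.1)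
      rw [h12] at hγ₁
      rw [← hcdef] at hγ₁
      linarith
    refine ⟨γ₁, hsub1 hγ₁m, γ₂, hsub2 hγ₂m, hne, ?_, ?_⟩
    · show r / Nr * Fg n b γ₁ = 1
      rw [hγ₁, hvdef]
      field_simp
    · show r / Nr * Fg n b γ₂ = 1
      rw [hγ₂, hvdef]
      field_simp
end
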